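/- Let p be a prime, and let K be a complete discretely valued field of characteristic p with normalized valuation v : K → ℤ ∪ {∞} and algebraically closed residue field. Let u, A, c ∈ K with v(u) = 0, v(A) = p − 1, and v(c) = ι where ι is an integer with ι ≥ p. Then there exists z ∈ K with u·z^p + A·z = c and v(z) = ι − p + 1. -/

import Mathlib

section Aux

variable {K : Type*} [Field K] {v : K → WithTop ℤ}

private lemma vone (hv0 : ∀ a : K, v a = ⊤ ↔ a = 0)
    (hvmul : ∀ a b : K, v (a * b) = v a + v b) : v (1 : K) = 0 := by
  have h := hvmul 1 1
  rw [mul_one] at h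
  have h1 : v (1 : K) ≠ ⊤ := by simp [hv0]
  lift v (1 : K) to ℤ using h1 with x
  norm_cast at h ⊢
  omega

private lemma vneg (hv0 : ∀ a : K, v a = ⊤ ↔ a = 0)
    (hvmul : ∀ a b : K, v (a * b) = v a + v b) (a : K) : v (-a) = v a := by
  have hm1 : v (-1 : K) = 0 := by
    have h := hvmul (-1) (-1)
    rw [neg_mul_neg, one_mul, vone hv0 hvmul] at h
    have h1 : v (-1 : K) ≠ ⊤ := by simp [hv0]
    lift v (-1 : K) to ℤ using h1 with x
    norm_cast at h ⊢
    omega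
  rw [show -a = -1 * a by ring, hvmul, hm1, zero_add]

private lemma vadd_left (hv0 : ∀ a : K, v a = ⊤ ↔ a = 0)
    (hvmul : ∀ a b : K, v (a * b) = v a + v b)
    (hvadd : ∀ a b : K, min (v a) (v b) ≤ v (a + b))
    {a b : K} (h : v a < v b) : v (a + b) = v a := by
  have h1 : v a ≤ v (a + b) := by
    have := hvadd a b
    rwa [min_eq_left h.le] at this
  refine le_antisymm ?_ h1
  by_contra hcon
  push_neg at hcon
  have h3 := hvadd (a + b) (-b)
  rw [vneg hv0 hvmul] at h3
  have h4 : a + b + -b = a := by ring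
  rw [h4] at h3
  exact absurd h3 (not_le.mpr (lt_min hcon h))

private lemma vadd_min (hv0 : ∀ a : K, v a = ⊤ ↔ a = 0)
    (hvmul : ∀ a b : K, v (a * b) = v a + v b)
    (hvadd : ∀ a b : K, min (v a) (v b) ≤ v (a + b))
    {a b : K} (h : v a ≠ v b) : v (a + b) = min (v a) (v b) := by
  rcases h.lt_or_gt with h | h
  · rw [vadd_left hv0 hvmul hvadd h, min_eq_left h.le]
  · rw [add_comm, vadd_left hv0 hvmul hvadd h, min_eq_right h.le]

private lemma vpow_le (hv0 : ∀ a : K, v a = ⊤ ↔ a = 0)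
    (hvmul : ∀ a b : K, v (a * b) = v a + v b)
    {a : K} {m : ℤ} (h : (m : WithTop ℤ) ≤ v a) (n : ℕ) :
    ((n * m : ℤ) : WithTop ℤ) ≤ v (a ^ n) := by
  induction n with
  | zero => simp [vone hv0 hvmul]
  | succ n ih =>
    rw [pow_succ, hvmul]
    have e : (((n : ℤ) + 1) * m : ℤ) = (n * m : ℤ) + m := by ring
    push_cast
    calc ((n : WithTop ℤ) + 1) * (m : WithTop ℤ) = ((((n : ℤ) + 1) * m : ℤ) : WithTop ℤ) := by
          push_cast; rfl
    _ = (((n : ℤ) * m : ℤ) : WithTop ℤ) + (m : WithTop ℤ) := by rw [e]; push_cast; rfl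
    _ ≤ v (a ^ n) + v a := add_le_add (by exact_mod_cast ih) h

private lemma vpow_eq (hv0 : ∀ a : K, v a = ⊤ ↔ a = 0)
    (hvmul : ∀ a b : K, v (a * b) = v a + v b)
    {a : K} {m : ℤ} (h : v a = (m : WithTop ℤ)) (n : ℕ) :
    v (a ^ n) = ((n * m : ℤ) : WithTop ℤ) := by
  induction n with
  | zero => simp [vone hv0 hvmul]
  | succ n ih =>
    rw [pow_succ, hvmul, ih, h, ← WithTop.coe_add]
    congr 1
    push_cast
    ring

private lemma vne (hv0 : ∀ a : K, v a = ⊤ ↔ a = 0) {a : K} {m : ℤ}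
    (h : v a = (m : WithTop ℤ)) : a ≠ 0 := by
  intro e
  rw [e, (hv0 0).mpr rfl] at h
  exact (WithTop.coe_ne_top h.symm).elim

private lemma vinv (hv0 : ∀ a : K, v a = ⊤ ↔ a = 0)
    (hvmul : ∀ a b : K, v (a * b) = v a + v b) {a : K} {m : ℤ}
    (h : v a = (m : WithTop ℤ)) : v a⁻¹ = ((-m : ℤ) : WithTop ℤ) := by
  have ha : a ≠ 0 := vne hv0 h
  have h2 := hvmul a⁻¹ a
  rw [inv_mul_cancel₀ ha, vone hv0 hvmul, h] at h2
  have ht : v a⁻¹ ≠ ⊤ := by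
    intro e
    rw [e, top_add] at h2
    simp at h2
  lift v a⁻¹ to ℤ using ht with x
  norm_cast at h2 ⊢
  omega

private lemma one_le_of_pos {x : WithTop ℤ} (h : 0 < x) : ((1 : ℤ) : WithTop ℤ) ≤ x := by
  induction x using WithTop.recTopCoe with
  | top => exact le_top
  | coe k =>
    norm_cast
    have : (0 : ℤ) < k := by exact_mod_cast h
    omega

private lemma eq_top_of_forall {x : WithTop ℤ} (h : ∀ m : ℤ, (m : WithTop ℤ) ≤ x) : x = ⊤ := by
  induction x using WithTop.recTopCoe with
  | top => rfl
  | coe k =>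
    have := h (k + 1)
    norm_cast at this
    omega

end Aux

private lemma newton (p : ℕ) (hp : p.Prime) {K : Type*} [Field K] [CharP K p]
    {v : K → WithTop ℤ}
    (hv0 : ∀ a, v a = ⊤ ↔ a = 0)
    (hvmul : ∀ a b, v (a * b) = v a + v b)
    (hvadd : ∀ a b, min (v a) (v b) ≤ v (a + b))
    (hcomplete : ∀ f : ℕ → K,
      (∀ m : ℤ, ∃ N : ℕ, ∀ i ≥ N, ∀ j ≥ N, ((m : ℤ) : WithTop ℤ) ≤ v (f i - f j)) →
      ∃ L : K, ∀ m : ℤ, ∃ N : ℕ, ∀ i ≥ N, ((m : ℤ) : WithTop ℤ) ≤ v (f i - L))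
    {u A c : K} {ι : ℤ} (hι : (p : ℤ) ≤ ι)
    (hu : v u = (0 : ℤ)) (hA : v A = ((p : ℤ) - 1 : ℤ)) (hc : v c = (ι : WithTop ℤ))
    (z0 : K) (hz0 : v z0 = ((ι - p + 1 : ℤ) : WithTop ℤ))
    (hr0 : ((ι + 1 : ℤ) : WithTop ℤ) ≤ v (c - (u * z0 ^ p + A * z0))) :
    ∃ z : K, u * z ^ p + A * z = c ∧ v z = ((ι - p + 1 : ℤ) : WithTop ℤ) := by
  haveI := Fact.mk hp
  have hp2 : (2 : ℤ) ≤ (p : ℤ) := by exact_mod_cast hp.two_le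
  have hA0 : A ≠ 0 := vne hv0 hA
  have hAinv : v A⁻¹ = ((1 - p : ℤ) : WithTop ℤ) := by
    have h := vinv hv0 hvmul hA
    rwa [show (-((p : ℤ) - 1)) = 1 - p by ring] at h
  set r : K → K := fun z => c - (u * z ^ p + A * z) with hr
  set N : K → K := fun z => z + r z * A⁻¹ with hN
  set zs : ℕ → K := fun n => N^[n] z0 with hzs
  have hzs0 : zs 0 = z0 := rfl
  have hzsS : ∀ n, zs (n + 1) = N (zs n) := fun n => Function.iterate_succ_apply' N n z0
  have hkey : ∀ z : K, r (N z) = -(u * (r z * A⁻¹) ^ p) := by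
    intro z
    have hc1 : (z + r z * A⁻¹) ^ p = z ^ p + (r z * A⁻¹) ^ p := add_pow_char _ _ p
    simp only [hN, hr] at hc1 ⊢
    rw [hc1]
    field_simp
    ring
  have hdelta : ∀ (z : K) (m : ℤ), (m : WithTop ℤ) ≤ v (r z) →
      ((m + 1 - p : ℤ) : WithTop ℤ) ≤ v (r z * A⁻¹) := by
    intro z m hm
    rw [hvmul, hAinv]
    calc ((m + 1 - p : ℤ) : WithTop ℤ) = (m : WithTop ℤ) + ((1 - p : ℤ) : WithTop ℤ) := by
          rw [← WithTop.coe_add]; congr 1; ring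
    _ ≤ v (r z) + ((1 - p : ℤ) : WithTop ℤ) := add_le_add_left hm _
  have hrn : ∀ n : ℕ, ((ι + 1 + n : ℤ) : WithTop ℤ) ≤ v (r (zs n)) := by
    intro n
    induction n with
    | zero => simp only [Nat.cast_zero, add_zero]; exact hr0
    | succ n ih =>
      rw [hzsS, hkey, vneg hv0 hvmul, hvmul, hu, WithTop.coe_zero, zero_add]
      have h1 := hdelta (zs n) _ ih
      have h2 := vpow_le hv0 hvmul h1 p
      refine le_trans ?_ h2
      rw [WithTop.coe_le_coe]
      have hn : (0 : ℤ) ≤ (n : ℤ) := Int.natCast_nonneg n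
      have hq1 : (0 : ℤ) ≤ ((p : ℤ) - 1) * (ι - p) := mul_nonneg (by omega) (by omega)
      have hq2 : (0 : ℤ) ≤ ((p : ℤ) - 1) * (n : ℤ) := mul_nonneg (by omega) hn
      push_cast
      nlinarith [hq1, hq2, hp2]
  have hdiff : ∀ n, zs (n + 1) - zs n = r (zs n) * A⁻¹ := by
    intro n
    rw [hzsS]
    simp only [hN]
    ring
  have hdel : ∀ n : ℕ, ((ι + n + 2 - p : ℤ) : WithTop ℤ) ≤ v (zs (n + 1) - zs n) := by
    intro n
    rw [hdiff]
    have := hdelta (zs n) _ (hrn n)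
    refine le_trans (le_of_eq ?_) this
    norm_cast
    ring
  have htel : ∀ i k : ℕ, ((ι + i + 2 - p : ℤ) : WithTop ℤ) ≤ v (zs (i + k) - zs i) := by
    intro i k
    induction k with
    | zero => rw [Nat.add_zero, sub_self, (hv0 0).mpr rfl]; exact le_top
    | succ k ih =>
      have e : zs (i + (k + 1)) - zs i = (zs (i + k + 1) - zs (i + k)) + (zs (i + k) - zs i) := by
        rw [show i + (k + 1) = i + k + 1 from rfl]; ring
      rw [e]
      refine le_trans (le_min ?_ ih) (hvadd _ _)
      refine le_trans ?_ (hdel (i + k))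
      rw [WithTop.coe_le_coe]
      push_cast
      omega
  have hcau : ∀ m : ℤ, ∃ Nn : ℕ, ∀ i ≥ Nn, ∀ j ≥ Nn, ((m : ℤ) : WithTop ℤ) ≤ v (zs i - zs j) := by
    intro m
    refine ⟨(m - ι - 2 + p).toNat, ?_⟩
    intro i hi j hj
    rcases le_total j i with h | h
    · obtain ⟨k, rfl⟩ := Nat.exists_eq_add_of_le h
      refine le_trans ?_ (htel j k)
      rw [WithTop.coe_le_coe]
      have := Int.toNat_le.mp hj
      omega
    · obtain ⟨k, rfl⟩ := Nat.exists_eq_add_of_le h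
      rw [show zs i - zs (i + k) = -(zs (i + k) - zs i) by ring, vneg hv0 hvmul]
      refine le_trans ?_ (htel i k)
      rw [WithTop.coe_le_coe]
      have := Int.toNat_le.mp hi
      omega
  obtain ⟨L, hL⟩ := hcomplete zs hcau
  have heq : u * L ^ p + A * L = c := by
    have hall : ∀ m : ℤ, (m : WithTop ℤ) ≤ v (c - (u * L ^ p + A * L)) := by
      intro m
      set m' : ℤ := max m 1 with hm'
      have hm'1 : 1 ≤ m' := le_max_right m 1
      have hmm' : m ≤ m' := le_max_left m 1
      obtain ⟨N1, hN1⟩ := hL m'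
      set n : ℕ := max N1 (m - ι - 1).toNat with hn
      have h1 : (m' : WithTop ℤ) ≤ v (zs n - L) := hN1 n (le_max_left _ _)
      have h2 : ((ι + 1 + n : ℤ) : WithTop ℤ) ≤ v (r (zs n)) := hrn n
      have e : c - (u * L ^ p + A * L)
          = r (zs n) + (u * (zs n - L) ^ p + A * (zs n - L)) := by
        have hc1 : (zs n - L + L) ^ p = (zs n - L) ^ p + L ^ p := add_pow_char _ _ p
        have hc2 : (zs n) ^ p = (zs n - L) ^ p + L ^ p := by
          rw [← hc1, sub_add_cancel]
        simp only [hr]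
        rw [hc2]
        ring
      rw [e]
      have hmr : (m : WithTop ℤ) ≤ v (r (zs n)) := by
        refine le_trans ?_ h2
        rw [WithTop.coe_le_coe]
        have ht : (m - ι - 1).toNat ≤ n := le_max_right _ _
        have := Int.toNat_le.mp ht
        omega
      have hx : (m : WithTop ℤ) ≤ v (u * (zs n - L) ^ p) := by
        rw [hvmul, hu, WithTop.coe_zero, zero_add]
        refine le_trans ?_ (vpow_le hv0 hvmul h1 p)
        rw [WithTop.coe_le_coe]
        have h3 : (0 : ℤ) ≤ ((p : ℤ) - 1) * m' := mul_nonneg (by omega) (by omega)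
        nlinarith [h3, hmm', hm'1]
      have hy : (m : WithTop ℤ) ≤ v (A * (zs n - L)) := by
        rw [hvmul, hA]
        calc (m : WithTop ℤ) ≤ (((p : ℤ) - 1 + m' : ℤ) : WithTop ℤ) := by
              rw [WithTop.coe_le_coe]; omega
        _ = (((p : ℤ) - 1 : ℤ) : WithTop ℤ) + (m' : WithTop ℤ) := by norm_cast
        _ ≤ _ := add_le_add_right h1 _
      refine le_trans (le_min hmr ?_) (hvadd _ _)
      exact le_trans (le_min hx hy) (hvadd _ _)
    have htop := eq_top_of_forall hall
    have := (hv0 _).mp htop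
    exact (sub_eq_zero.mp this).symm
  have hvL : v L = ((ι - p + 1 : ℤ) : WithTop ℤ) := by
    have hL2 : ((ι + 2 - p : ℤ) : WithTop ℤ) ≤ v (L - z0) := by
      obtain ⟨N1, hN1⟩ := hL (ι + 2 - p)
      have h1 : ((ι + 2 - p : ℤ) : WithTop ℤ) ≤ v (zs N1 - L) := hN1 N1 le_rfl
      have h2 : ((ι + 2 - p : ℤ) : WithTop ℤ) ≤ v (zs N1 - z0) := by
        have h3 := htel 0 N1
        rw [Nat.zero_add, hzs0] at h3
        refine le_trans ?_ h3
        rw [WithTop.coe_le_coe]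
        push_cast
        omega
      have e : L - z0 = -(zs N1 - L) + (zs N1 - z0) := by ring
      rw [e]
      refine le_trans (le_min ?_ h2) (hvadd _ _)
      rw [vneg hv0 hvmul]
      exact h1
    have hne : v z0 ≠ v (L - z0) := by
      rw [hz0]
      intro h
      have h4 := le_trans hL2 (le_of_eq h.symm)
      rw [WithTop.coe_le_coe] at h4
      omega
    have e : L = z0 + (L - z0) := by ring
    rw [e, vadd_min hv0 hvmul hvadd hne, hz0, min_eq_left]
    refine le_trans ?_ hL2
    rw [WithTop.coe_le_coe]
    omega
  exact ⟨L, heq, hvL⟩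

/-- Let `p` be a prime, and let `K` be a complete discretely valued field of
characteristic `p` with normalized valuation `v : K → ℤ ∪ {∞}` and algebraically closed
residue field.  Let `u, A, c ∈ K` with `v(u) = 0`, `v(A) = p − 1`, and `v(c) = ι` where `ι`
is an integer with `ι ≥ p`.  Then there exists `z ∈ K` with `u·z^p + A·z = c` and
`v(z) = ι − p + 1`.

Here the valuation is encoded by its axioms, completeness by the convergence of Cauchy
sequences, and algebraic closedness of the residue field by the solvability modulo the
maximal ideal of every polynomial with integral coefficients, unit leading coefficient and
positive degree. -/
theorem stmt_11 (p : ℕ) (hp : p.Prime) (K : Type*) [Field K] [CharP K p]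
    (v : K → WithTop ℤ)
    (hv0 : ∀ a, v a = ⊤ ↔ a = 0)
    (hvmul : ∀ a b, v (a * b) = v a + v b)
    (hvadd : ∀ a b, min (v a) (v b) ≤ v (a + b))
    -- `v` is normalized, i.e. surjective onto `ℤ`
    (hvsurj : ∀ n : ℤ, ∃ a : K, v a = (n : WithTop ℤ))
    -- `K` is complete: every Cauchy sequence converges
    (hcomplete : ∀ f : ℕ → K,
      (∀ m : ℤ, ∃ N : ℕ, ∀ i ≥ N, ∀ j ≥ N, ((m : ℤ) : WithTop ℤ) ≤ v (f i - f j)) →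
      ∃ L : K, ∀ m : ℤ, ∃ N : ℕ, ∀ i ≥ N, ((m : ℤ) : WithTop ℤ) ≤ v (f i - L))
    -- the residue field of `v` is algebraically closed
    (hres : ∀ f : Polynomial K, 0 < f.natDegree →
      (∀ i, 0 ≤ v (f.coeff i)) → v f.leadingCoeff = 0 →
      ∃ a : K, 0 ≤ v a ∧ 0 < v (Polynomial.eval a f))
    (u A c : K) (ι : ℤ) (hι : (p : ℤ) ≤ ι)
    (hu : v u = (0 : ℤ)) (hA : v A = ((p : ℤ) - 1 : ℤ)) (hc : v c = (ι : WithTop ℤ)) :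
    ∃ z : K, u * z ^ p + A * z = c ∧ v z = ((ι - p + 1 : ℤ) : WithTop ℤ) := by
  haveI := Fact.mk hp
  have hp2 : (2 : ℤ) ≤ (p : ℤ) := by exact_mod_cast hp.two_le
  have hA0 : A ≠ 0 := vne hv0 hA
  have hc0 : c ≠ 0 := vne hv0 hc
  have hu0 : u ≠ 0 := vne hv0 hu
  rcases eq_or_lt_of_le hι with hcase | hcase
  · -- ι = p : use the residue field to find a starting approximation
    obtain ⟨a, ha⟩ := hvsurj 1
    have ha0 : a ≠ 0 := vne hv0 ha
    set α : K := u * a ^ p * c⁻¹ with hα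
    set β : K := A * a * c⁻¹ with hβ
    have hcinv : v c⁻¹ = ((-ι : ℤ) : WithTop ℤ) := vinv hv0 hvmul hc
    have hvα : v α = ((0 : ℤ) : WithTop ℤ) := by
      rw [hα, hvmul, hvmul, hu, vpow_eq hv0 hvmul ha p, hcinv,
        ← WithTop.coe_add, ← WithTop.coe_add, WithTop.coe_inj]
      omega
    have hvβ : v β = ((0 : ℤ) : WithTop ℤ) := by
      rw [hβ, hvmul, hvmul, hA, ha, hcinv,
        ← WithTop.coe_add, ← WithTop.coe_add, WithTop.coe_inj]
      omega
    have hα0 : α ≠ 0 := vne hv0 hvα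
    have hβ0 : β ≠ 0 := vne hv0 hvβ
    set f : Polynomial K := Polynomial.C α * Polynomial.X ^ p
        + (Polynomial.C β * Polynomial.X - 1) with hf
    have hdeg : f.natDegree = p := by
      rw [hf]
      have h1 : (Polynomial.C α * Polynomial.X ^ p).natDegree = p :=
        Polynomial.natDegree_C_mul_X_pow p α hα0
      have h2 : (Polynomial.C β * Polynomial.X - 1).natDegree < p := by
        refine lt_of_le_of_lt (Polynomial.natDegree_sub_le _ _) ?_
        have h3 : (Polynomial.C β * Polynomial.X).natDegree ≤ 1 :=
          Polynomial.natDegree_C_mul_le β Polynomial.X |>.trans (by simp)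
        have h4 : (1 : Polynomial K).natDegree = 0 := Polynomial.natDegree_one
        have : 2 ≤ p := hp.two_le
        omega
      rw [← h1] at h2
      rw [Polynomial.natDegree_add_eq_left_of_natDegree_lt h2, h1]
    have hcoeff : ∀ i, f.coeff i = (if i = p then α else 0)
        + ((if i = 1 then β else 0) - if i = 0 then 1 else 0) := by
      intro i
      rw [hf]
      simp [Polynomial.coeff_X_pow, Polynomial.coeff_X, Polynomial.coeff_one]
      simp [eq_comm]
    have hp2' : 2 ≤ p := hp.two_le
    have hv0' : v (0 : K) = ⊤ := (hv0 0).mpr rfl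
    have hint : ∀ i, 0 ≤ v (f.coeff i) := by
      intro i
      rw [hcoeff i]
      split_ifs with h1 h2 h3 <;> try omega
      all_goals first
        | (rw [sub_zero, add_zero, hvα, WithTop.coe_zero])
        | (rw [sub_zero, zero_add, hvβ, WithTop.coe_zero])
        | (rw [zero_sub, zero_add, vneg hv0 hvmul, vone hv0 hvmul])
        | (rw [sub_zero, add_zero, hv0']; exact le_top)
    have hlead : v f.leadingCoeff = 0 := by
      have hl : f.leadingCoeff = α := by
        rw [Polynomial.leadingCoeff, hdeg, hcoeff p]
        rw [if_pos rfl, if_neg (by omega), if_neg (by omega)]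
        ring
      rw [hl, hvα, WithTop.coe_zero]
    have hpos : 0 < f.natDegree := by rw [hdeg]; exact hp.pos
    obtain ⟨t, ht0, ht1⟩ := hres f hpos hint hlead
    have heval : Polynomial.eval t f = α * t ^ p + β * t - 1 := by
      rw [hf]; simp; ring
    rw [heval] at ht1
    have htv : v t = 0 := by
      rcases eq_or_lt_of_le ht0 with h | h
      · exact h.symm
      exfalso
      have hx : 0 < v (α * t ^ p + β * t) := by
        refine lt_of_lt_of_le (lt_min ?_ ?_) (hvadd _ _)
        · rw [hvmul, hvα, WithTop.coe_zero, zero_add]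
          have h1 := one_le_of_pos h
          have h2 := vpow_le hv0 hvmul h1 p
          refine lt_of_lt_of_le ?_ h2
          rw [show (0 : WithTop ℤ) = ((0 : ℤ) : WithTop ℤ) from rfl, WithTop.coe_lt_coe]
          push_cast
          omega
        · rw [hvmul, hvβ, WithTop.coe_zero, zero_add]
          exact h
      have hne : v (α * t ^ p + β * t) ≠ v (-1 : K) := by
        rw [vneg hv0 hvmul, vone hv0 hvmul]
        exact ne_of_gt hx
      have hz : v (α * t ^ p + β * t - 1) = 0 := by
        rw [sub_eq_add_neg, vadd_min hv0 hvmul hvadd hne, vneg hv0 hvmul,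
          vone hv0 hvmul, min_eq_right hx.le]
      rw [hz] at ht1
      exact lt_irrefl _ ht1
    have hz0 : v (a * t) = ((ι - p + 1 : ℤ) : WithTop ℤ) := by
      rw [hvmul, ha, htv, show (0 : WithTop ℤ) = ((0 : ℤ) : WithTop ℤ) from rfl,
        ← WithTop.coe_add, WithTop.coe_inj]
      omega
    refine newton p hp hv0 hvmul hvadd hcomplete hι hu hA hc (a * t) hz0 ?_
    have e : c - (u * (a * t) ^ p + A * (a * t)) = -(c * (α * t ^ p + β * t - 1)) := by
      simp only [hα, hβ]
      field_simp
      ring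
    rw [e, vneg hv0 hvmul, hvmul, hc]
    have h1 := one_le_of_pos ht1
    calc ((ι + 1 : ℤ) : WithTop ℤ) = (ι : WithTop ℤ) + ((1 : ℤ) : WithTop ℤ) := by
          rw [← WithTop.coe_add]
    _ ≤ (ι : WithTop ℤ) + v (α * t ^ p + β * t - 1) := add_le_add_right h1 _
  · -- p < ι : start from c / A
    have hz0 : v (c * A⁻¹) = ((ι - p + 1 : ℤ) : WithTop ℤ) := by
      rw [hvmul, hc, vinv hv0 hvmul hA, ← WithTop.coe_add, WithTop.coe_inj]
      ring
    refine newton p hp hv0 hvmul hvadd hcomplete hι hu hA hc (c * A⁻¹) hz0 ?_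
    have e : c - (u * (c * A⁻¹) ^ p + A * (c * A⁻¹)) = -(u * (c * A⁻¹) ^ p) := by
      field_simp
      ring
    rw [e, vneg hv0 hvmul, hvmul, hu, WithTop.coe_zero, zero_add, vpow_eq hv0 hvmul hz0 p]
    rw [WithTop.coe_le_coe]
    have h1 : (0 : ℤ) ≤ ((p : ℤ) - 1) * (ι - p - 1) := mul_nonneg (by omega) (by omega)
    nlinarith [h1, hp2]
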